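/- Let n ≥ 2 and let M : ℝ² → Matrix(Fin n, Fin n, ℂ) be differentiable at p₀ ∈ ℝ², with det M(p₀) = 0 but with the derivative of the map k ↦ det M(k) at p₀ nonzero (i.e., p₀ is a simple zero of det∘M). Then the matrix M(p₀) has rank n−1, its adjugate adj M(p₀) is nonzero of rank 1, and there exist vectors U, V ∈ ℂⁿ such that adj M(p₀) = U ⊗ V, i.e. (adj M(p₀))_{i,j} = U_i V_j for all i, j. -/

import Mathlib

open Matrix

/-- The determinant, as a continuous `ℝ`-multilinear map in the rows. -/
noncomputable def detRowCMM (n : ℕ) :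
    ContinuousMultilinearMap ℝ (fun _ : Fin n => (Fin n → ℂ)) ℂ where
  toMultilinearMap :=
    ((detRowAlternating : (Fin n → ℂ) [⋀^Fin n]→ₗ[ℂ] ℂ)).toMultilinearMap.restrictScalars ℝ
  cont := by
    have h : Continuous fun x : Fin n → Fin n → ℂ => (Matrix.of x).det :=
      Continuous.matrix_det continuous_id
    exact h

theorem exists_updateRow_det_ne_zero (n : ℕ)
    (M : ℝ × ℝ → Matrix (Fin n) (Fin n) ℂ) (p₀ : ℝ × ℝ)
    (hdiff : ∀ i j, DifferentiableAt ℝ (fun k => M k i j) p₀)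
    (h1 : fderiv ℝ (fun k => (M k).det) p₀ ≠ 0) :
    ∃ (i : Fin n) (r : Fin n → ℂ), ((M p₀).updateRow i r).det ≠ 0 := by
  classical
  by_contra hcon
  push_neg at hcon
  apply h1
  have hg : ∀ i : Fin n, HasFDerivAt (fun k => M k i)
      (fderiv ℝ (fun k => M k i) p₀) p₀ := fun i =>
    (differentiableAt_pi.2 (hdiff i)).hasFDerivAt
  have hF := HasFDerivAt.multilinear_comp (detRowCMM n) hg
  have hfun : (fun x => (detRowCMM n) (fun i => M x i)) = fun k => (M k).det := rfl
  rw [hfun] at hF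
  rw [hF.fderiv]
  have hz : ∀ i : Fin n,
      (detRowCMM n).toContinuousLinearMap (fun j => M p₀ j) i = 0 := by
    intro i
    ext r
    have : ((M p₀).updateRow i r).det = 0 := hcon i r
    simp [ContinuousMultilinearMap.toContinuousLinearMap_apply]
    exact this
  simp [hz]

theorem adjugate_rank_one_at_simple_zero (n : ℕ) (hn : 2 ≤ n)
    (M : ℝ × ℝ → Matrix (Fin n) (Fin n) ℂ) (p₀ : ℝ × ℝ)
    (hdiff : ∀ i j, DifferentiableAt ℝ (fun k => M k i j) p₀)
    (h0 : (M p₀).det = 0)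
    (h1 : fderiv ℝ (fun k => (M k).det) p₀ ≠ 0) :
    (M p₀).rank = n - 1 ∧
    (M p₀).adjugate ≠ 0 ∧
    (M p₀).adjugate.rank = 1 ∧
    ∃ U V : Fin n → ℂ, ∀ i j, (M p₀).adjugate i j = U i * V j := by
  classical
  obtain ⟨i, r, hir⟩ := exists_updateRow_det_ne_zero n M p₀ hdiff h1
  set A := M p₀ with hAdef
  -- determinant of a row-updated matrix, in terms of the adjugate
  have hdet_update : ∀ (i : Fin n) (r : Fin n → ℂ),
      (A.updateRow i r).det = ∑ j, r j * A.adjugate j i := by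
    intro i r
    have h1' : (A.updateRow i r).det = cramer Aᵀ r i :=
      (cramer_transpose_apply A r i).symm
    have h2' : (r : Fin n → ℂ) = ∑ j, r j • (Pi.single j 1 : Fin n → ℂ) := by
      ext k
      rw [Finset.sum_apply]
      simp [Pi.single_apply, eq_comm]
    rw [h1']
    conv_lhs => rw [h2']
    rw [map_sum]
    simp only [_root_.map_smul]
    have h3' : ∀ j : Fin n, cramer Aᵀ (Pi.single j 1) = A.adjugate j := fun j => rfl
    simp [h3', smul_eq_mul]
  -- the adjugate is nonzero
  have hadj_ne : A.adjugate ≠ 0 := by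
    intro h
    apply hir
    rw [hdet_update i r, h]
    simp
  -- the row-updated matrix is invertible, so n-1 rows of A are linearly independent
  have hU : IsUnit (A.updateRow i r) :=
    (Matrix.isUnit_iff_isUnit_det _).2 (isUnit_iff_ne_zero.2 hir)
  have hli : LinearIndependent ℂ (fun k => A.updateRow i r k) :=
    Matrix.linearIndependent_rows_iff_isUnit.2 hU
  have hli' : LinearIndependent ℂ (fun k : {k : Fin n // k ≠ i} => A k.1) := by
    have := hli.comp (fun k : {k : Fin n // k ≠ i} => k.1) Subtype.val_injective
    convert this using 1
    funext k
    exact (Matrix.updateRow_ne k.2).symm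
  -- rank lower bound: n - 1 ≤ rank A
  have hcard : Fintype.card {k : Fin n // k ≠ i} = n - 1 := by
    simp [Fintype.card_subtype_compl]
  have hrank_low : n - 1 ≤ A.rank := by
    rw [Matrix.rank_eq_finrank_span_row]
    have hle : Submodule.span ℂ (Set.range (fun k : {k : Fin n // k ≠ i} => A k.1)) ≤
        Submodule.span ℂ (Set.range A) := by
      apply Submodule.span_mono
      rintro _ ⟨k, rfl⟩
      exact ⟨k.1, rfl⟩
    have := Submodule.finrank_mono hle
    rwa [finrank_span_eq_card hli', hcard] at this
  -- rank A + rank adj ≤ n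
  have hmul : A * A.adjugate = 0 := by
    rw [Matrix.mul_adjugate, h0, zero_smul]
  have hsum : A.rank + A.adjugate.rank ≤ n := by
    have := Matrix.rank_add_rank_le_card_of_mul_eq_zero hmul
    simpa using this
  -- the adjugate has positive rank
  have hadjrank_pos : 1 ≤ A.adjugate.rank := by
    by_contra h
    push_neg at h
    apply hadj_ne
    have h0' : A.adjugate.rank = 0 := by omega
    have : LinearMap.range A.adjugate.mulVecLin = ⊥ := by
      rw [Matrix.rank] at h0'
      exact Submodule.finrank_eq_zero.1 h0'
    ext k j
    have hz : A.adjugate.mulVecLin (Pi.single j 1) = 0 := by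
      rw [← LinearMap.mem_ker, LinearMap.ker_eq_top.2]
      · trivial
      · exact LinearMap.range_eq_bot.1 this
    have := congrFun hz k
    simpa [Matrix.mulVecLin_apply, Matrix.mulVec_single] using this
  have hrankA : A.rank = n - 1 := by omega
  have hrankAdj : A.adjugate.rank = 1 := by omega
  refine ⟨hrankA, hadj_ne, hrankAdj, ?_⟩
  -- kernel of A has dimension 1
  have hker : Module.finrank ℂ (LinearMap.ker A.mulVecLin) = 1 := by
    have hrn := LinearMap.finrank_range_add_finrank_ker A.mulVecLin
    have hdom : Module.finrank ℂ (Fin n → ℂ) = n := by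
      simp [Module.finrank_fintype_fun_eq_card]
    rw [hdom] at hrn
    have : A.rank = Module.finrank ℂ (LinearMap.range A.mulVecLin) := rfl
    omega
  -- columns of the adjugate lie in the kernel of A
  have hcol_mem : ∀ j : Fin n, (fun k => A.adjugate k j) ∈ LinearMap.ker A.mulVecLin := by
    intro j
    rw [LinearMap.mem_ker]
    funext k
    have : (A * A.adjugate) k j = 0 := by rw [hmul]; rfl
    simpa [Matrix.mulVecLin_apply, Matrix.mulVec, Matrix.mul_apply, dotProduct] using this
  -- pick a nonzero entry of the adjugate
  obtain ⟨i₀, j₀, hne⟩ : ∃ i₀ j₀, A.adjugate i₀ j₀ ≠ 0 := by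
    by_contra h
    push_neg at h
    exact hadj_ne (by ext a b; simpa using h a b)
  set U : Fin n → ℂ := fun k => A.adjugate k j₀ with hUdef
  have hUne : U ≠ 0 := fun h => hne (by simpa [hUdef] using congrFun h i₀)
  have hUmem : U ∈ LinearMap.ker A.mulVecLin := hcol_mem j₀
  -- the kernel is spanned by U
  have hspan : Submodule.span ℂ {U} = LinearMap.ker A.mulVecLin := by
    apply Submodule.eq_of_le_of_finrank_le
    · rwa [Submodule.span_singleton_le_iff_mem]
    · rw [hker, finrank_span_singleton hUne]
  -- each column of the adjugate is a multiple of U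
  have hVex : ∀ j : Fin n, ∃ t : ℂ, (fun k => A.adjugate k j) = t • U := by
    intro j
    have : (fun k => A.adjugate k j) ∈ Submodule.span ℂ {U} := by
      rw [hspan]; exact hcol_mem j
    obtain ⟨t, ht⟩ := Submodule.mem_span_singleton.1 this
    exact ⟨t, ht.symm⟩
  choose t ht using hVex
  refine ⟨U, t, fun a b => ?_⟩
  have := congrFun (ht b) a
  simpa [mul_comm] using this
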